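/- For a dynamic MFM with gamma_K = alpha/K, the predictive probability that a new observation creates a new cluster satisfies P(y_{N+1} in C_{k+1} | N, K_+ = k, alpha) = alpha/(alpha + N) * [1 - k * (sum_{K>=k} p(K)/K * R_{N,k}^{K,alpha}) / (sum_{K>=k} p(K) * R_{N,k}^{K,alpha})], and in particular this probability is bounded above by alpha/(alpha + N). -/

import Mathlib

open Finset

/-- For a dynamic MFM with `γ_K = α/K`, the predictive probability that a new
observation creates a new cluster, defined as the EPPF ratio `p(C^new|N+1,α)/p(C|N,α)`,
equals `α/(α+N) · [1 - k (∑_{K≥k} p(K)/K · R_{N,k}^{K,α})/(∑_{K≥k} p(K) R_{N,k}^{K,α})]`,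
and in particular is bounded above by `α/(α+N)`. -/
theorem dynamic_MFM_predictive (N k : ℕ) (hk : 0 < k) (α : ℝ) (hα : 0 < α)
    (Nj : Fin k → ℕ) (hNj : ∀ j, 0 < Nj j) (hsum : ∑ j, Nj j = N)
    (p : ℕ → ℝ) (hp : ∀ K, 0 ≤ p K) (hp0 : p 0 = 0) (hps : ∑' K : ℕ, p K = 1)
    -- the correction factor `R_{N,k}^{K,α}` of the current partition
    (R : ℕ → ℝ)
    (hR : ∀ K, R K = ∏ j : Fin k,
        (Real.Gamma ((Nj j : ℝ) + α / K) * ((K : ℝ) - j)) /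
          (Real.Gamma (1 + α / K) * Real.Gamma (Nj j) * K))
    -- the correction factor of the partition with the extra singleton cluster
    (Rnew : ℕ → ℝ)
    (hRnew : ∀ K, Rnew K = ∏ j : Fin (k + 1),
        (Real.Gamma (((Fin.snoc Nj 1 : Fin (k + 1) → ℕ) j : ℝ) + α / K) * ((K : ℝ) - j)) /
          (Real.Gamma (1 + α / K) * Real.Gamma ((Fin.snoc Nj 1 : Fin (k + 1) → ℕ) j) * K))
    -- summability of the relevant series
    (hs1 : Summable fun K : ℕ => if k ≤ K then p K * R K else 0)
    (hs2 : Summable fun K : ℕ => if k ≤ K then p K / K * R K else 0)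
    (hs3 : Summable fun K : ℕ => if k + 1 ≤ K then p K * Rnew K else 0)
    (hpos : 0 < ∑' K : ℕ, if k ≤ K then p K * R K else 0)
    -- the predictive probability, defined as the ratio `p(C^new|N+1,α)/p(C|N,α)` of EPPFs
    (pred : ℝ)
    (hpred : pred =
      ((α ^ (k + 1) * Real.Gamma α / Real.Gamma (α + (N + 1)) *
          ((∏ j, Real.Gamma (Nj j)) * Real.Gamma 1)) *
        (∑' K : ℕ, if k + 1 ≤ K then p K * Rnew K else 0)) /
      ((α ^ k * Real.Gamma α / Real.Gamma (α + N) * ∏ j, Real.Gamma (Nj j)) *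
        (∑' K : ℕ, if k ≤ K then p K * R K else 0))) :
    pred = α / (α + N) *
        (1 - k * (∑' K : ℕ, if k ≤ K then p K / K * R K else 0) /
          (∑' K : ℕ, if k ≤ K then p K * R K else 0))
    ∧ pred ≤ α / (α + N) := by
  set S := ∑' K : ℕ, if k ≤ K then p K * R K else 0 with hS
  set T := ∑' K : ℕ, if k ≤ K then p K / K * R K else 0 with hT
  -- Rnew K = R K * (K - k) / K
  have hRnewR : ∀ K : ℕ, Rnew K = R K * (((K : ℝ) - k) / K) := by
    intro K
    rw [hRnew K, hR K, Fin.prod_univ_castSucc]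
    congr 1
    · apply Finset.prod_congr rfl
      intro j _
      rw [Fin.snoc_castSucc]
      norm_num [Fin.coe_castSucc]
    · have hg : Real.Gamma (1 + α / K) ≠ 0 := by
        have h0 : (0:ℝ) ≤ α / K := by positivity
        exact (Real.Gamma_pos_of_pos (by linarith)).ne'
      simp only [Fin.snoc_last, Fin.val_last, Nat.cast_one, Real.Gamma_one, mul_one]
      rw [mul_div_mul_left _ _ hg]
  -- pointwise identity for the new series
  have hfun : (fun K : ℕ => if k + 1 ≤ K then p K * Rnew K else 0)
      = fun K : ℕ => (if k ≤ K then p K * R K else 0)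
        - (k : ℝ) * (if k ≤ K then p K / K * R K else 0) := by
    funext K
    rcases lt_trichotomy K k with h | h | h
    · rw [if_neg (by omega), if_neg (by omega), if_neg (by omega)]; ring
    · subst h
      rw [if_neg (by omega), if_pos le_rfl, if_pos le_rfl]
      have hK0 : (K : ℝ) ≠ 0 := Nat.cast_ne_zero.mpr (by omega)
      field_simp
      ring
    · rw [if_pos (by omega), if_pos (by omega), if_pos (by omega), hRnewR K]
      have hK0 : (K : ℝ) ≠ 0 := Nat.cast_ne_zero.mpr (by omega)
      field_simp
  have hs2' : Summable fun K : ℕ => (k : ℝ) * (if k ≤ K then p K / K * R K else 0) :=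
    hs2.mul_left _
  have htsum : (∑' K : ℕ, if k + 1 ≤ K then p K * Rnew K else 0) = S - (k : ℝ) * T := by
    rw [hfun, Summable.tsum_sub hs1 hs2', tsum_mul_left]
  -- positivity facts
  have hαN : (0 : ℝ) < α + N := by positivity
  have hP : (0 : ℝ) < ∏ j, Real.Gamma (Nj j) := by
    apply Finset.prod_pos
    intro j _
    exact Real.Gamma_pos_of_pos (by exact_mod_cast hNj j)
  have hG : (0 : ℝ) < Real.Gamma (α + N) := Real.Gamma_pos_of_pos hαN
  have hGα : (0 : ℝ) < Real.Gamma α := Real.Gamma_pos_of_pos hα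
  have hGadd : Real.Gamma (α + (N + 1)) = (α + N) * Real.Gamma (α + N) := by
    rw [show α + ((N : ℝ) + 1) = (α + N) + 1 by ring, Real.Gamma_add_one hαN.ne']
  -- main formula
  have hmain : pred = α / (α + N) * (1 - (k : ℝ) * T / S) := by
    rw [hpred, htsum, hGadd, Real.Gamma_one]
    rw [pow_succ]
    field_simp
  refine ⟨hmain, ?_⟩
  rw [hmain]
  have hT0 : 0 ≤ T := by
    apply tsum_nonneg
    intro K
    split
    · rename_i hkK
      have hRK : 0 ≤ R K := by
        rw [hR K]
        apply Finset.prod_nonneg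
        intro j _
        have hj : (j : ℝ) < K := by
          exact_mod_cast lt_of_lt_of_le j.isLt hkK
        have h0 : (0:ℝ) ≤ α / K := by positivity
        have h1 : 0 < Real.Gamma ((Nj j : ℝ) + α / K) := by
          apply Real.Gamma_pos_of_pos
          have : (0:ℝ) < Nj j := by exact_mod_cast hNj j
          linarith
        have h2 : 0 < Real.Gamma (1 + α / K) := Real.Gamma_pos_of_pos (by linarith)
        have h3 : 0 < Real.Gamma (Nj j) := Real.Gamma_pos_of_pos (by exact_mod_cast hNj j)
        have hK : (0:ℝ) < K := lt_of_le_of_lt (by positivity) hj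
        apply div_nonneg
        · exact mul_nonneg h1.le (by linarith)
        · exact le_of_lt (by positivity)
      have hKpos : (0:ℝ) < K := by exact_mod_cast lt_of_lt_of_le hk hkK
      exact mul_nonneg (div_nonneg (hp K) hKpos.le) hRK
    · exact le_refl 0
  have h1 : 0 ≤ (k : ℝ) * T / S := by positivity
  have h2 : 1 - (k : ℝ) * T / S ≤ 1 := by linarith
  have h3 : 0 ≤ α / (α + N) := by positivity
  calc α / (α + N) * (1 - (k : ℝ) * T / S) ≤ α / (α + N) * 1 :=
        mul_le_mul_of_nonneg_left h2 h3
    _ = α / (α + N) := mul_one _
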